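/- Let γ > 1 and g(x) = (1/(γ+1))(2γx − (γ−1))((γ−1)/(γ+1) + (2/(γ+1))(1/x))^γ. Then for all x > 1, g(x) > 1. -/

import Mathlib

/-- For `γ > 1` and the entropy-jump function `g`, one has `g(x) > 1` for all `x > 1`
(the entropy condition across a shock with supersonic upstream flow). -/
theorem stmt_2 (γ : ℝ) (hγ : 1 < γ) :
    ∀ x : ℝ, 1 < x →
      1 < (1/(γ+1)) * (2*γ*x - (γ-1)) * ((γ-1)/(γ+1) + (2/(γ+1)) * (1/x)) ^ γ := by
  intro x hx
  have hγ0 : (0:ℝ) < γ + 1 := by linarith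
  set H : ℝ → ℝ := fun t =>
    Real.log (2*γ*t - (γ-1)) + γ * (Real.log ((γ-1)*t+2) - Real.log ((γ+1)*t)) with hH
  -- positivity of the arguments for t ≥ 1
  have hA : ∀ t : ℝ, 1 ≤ t → 0 < 2*γ*t - (γ-1) := by intro t ht; nlinarith
  have hB : ∀ t : ℝ, 1 ≤ t → 0 < (γ-1)*t+2 := by intro t ht; nlinarith
  have hC : ∀ t : ℝ, 1 ≤ t → 0 < (γ+1)*t := by intro t ht; nlinarith
  -- derivative
  have hderiv : ∀ t : ℝ, 1 ≤ t → HasDerivAt H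
      (2*γ/(2*γ*t-(γ-1)) + γ * ((γ-1)/((γ-1)*t+2) - (γ+1)/((γ+1)*t))) t := by
    intro t ht
    have h1 : HasDerivAt (fun t : ℝ => 2*γ*t - (γ-1)) (2*γ) t := by
      simpa using ((hasDerivAt_id t).const_mul (2*γ)).sub_const (γ-1)
    have h2 : HasDerivAt (fun t : ℝ => (γ-1)*t+2) (γ-1) t := by
      simpa using ((hasDerivAt_id t).const_mul (γ-1)).add_const 2
    have h3 : HasDerivAt (fun t : ℝ => (γ+1)*t) (γ+1) t := by
      simpa using (hasDerivAt_id t).const_mul (γ+1)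
    have l1 := h1.log (hA t ht).ne'
    have l2 := h2.log (hB t ht).ne'
    have l3 := h3.log (hC t ht).ne'
    exact l1.add ((l2.sub l3).const_mul γ)
  -- strict monotonicity on Ici 1
  have hmono : StrictMonoOn H (Set.Ici 1) := by
    apply strictMonoOn_of_deriv_pos (convex_Ici 1)
    · intro t ht
      exact ((hderiv t ht).differentiableAt.continuousAt).continuousWithinAt
    · intro t ht
      rw [interior_Ici] at ht
      have ht1 : (1:ℝ) ≤ t := le_of_lt ht
      rw [(hderiv t ht1).deriv]
      have hA' := hA t ht1
      have hB' := hB t ht1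
      have hC' := hC t ht1
      have key : 2*γ/(2*γ*t-(γ-1)) + γ * ((γ-1)/((γ-1)*t+2) - (γ+1)/((γ+1)*t))
          = 2*γ*(γ-1)*(γ+1)*(t-1)^2 / ((2*γ*t-(γ-1)) * (((γ-1)*t+2) * ((γ+1)*t))) := by
        have hA'' := hA'.ne'
        have hB'' := hB'.ne'
        have hC'' := hC'.ne'
        have ht0 : t ≠ 0 := by linarith
        have hg1 : γ + 1 ≠ 0 := hγ0.ne'
        set B := (γ-1)*t+2 with hBdef
        field_simp
        rw [hBdef]
        ring
      rw [key]
      apply div_pos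
      · have h1 : (0:ℝ) < 2*γ*(γ-1)*(γ+1) :=
          mul_pos (mul_pos (mul_pos (by norm_num) (by linarith)) (by linarith)) hγ0
        have h2 : (0:ℝ) < (t-1)^2 := pow_pos (by linarith [Set.mem_Ioi.mp ht]) 2
        nlinarith [mul_pos h1 h2]
      · exact mul_pos hA' (mul_pos hB' hC')
  have hHx : H 1 < H x := hmono (Set.self_mem_Ici) (le_of_lt hx) hx
  have hH1 : H 1 = Real.log (γ+1) := by
    show Real.log (2*γ*1 - (γ-1)) + γ * (Real.log ((γ-1)*1+2) - Real.log ((γ+1)*1)) = _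
    have e1 : 2*γ*1 - (γ-1) = γ+1 := by ring
    have e2 : (γ-1)*1+2 = γ+1 := by ring
    have e3 : (γ+1)*1 = γ+1 := by ring
    rw [e1, e2, e3]
    ring
  -- rewrite the goal
  have hu : (γ-1)/(γ+1) + (2/(γ+1)) * (1/x) = ((γ-1)*x+2)/((γ+1)*x) := by
    have hx0 : x ≠ 0 := by positivity
    field_simp
  have hu0 : 0 < ((γ-1)*x+2)/((γ+1)*x) := div_pos (hB x hx.le) (hC x hx.le)
  have hrw : (1/(γ+1)) * (2*γ*x - (γ-1)) * (((γ-1)*x+2)/((γ+1)*x)) ^ γ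
      = Real.exp (H x - Real.log (γ+1)) := by
    rw [Real.rpow_def_of_pos hu0, Real.log_div (hB x hx.le).ne' (hC x hx.le).ne']
    simp only [hH]
    rw [Real.exp_sub, Real.exp_add, Real.exp_log (hA x hx.le), Real.exp_log hγ0,
      mul_comm γ (Real.log ((γ-1)*x+2) - Real.log ((γ+1)*x))]
    ring
  rw [hu, hrw]
  have hpos : 0 < H x - Real.log (γ+1) := by rw [← hH1]; linarith
  simpa using Real.exp_lt_exp.mpr hpos
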